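/- Fix g > 0, q ≥ 1 and suppose 0 < z < g_c. Then f_z(Σ) > 0 for all Σ ≥ Σ_z, φ_A is strictly increasing and φ_B strictly decreasing on [Σ_z, ∞) with φ_A(Σ_z) = φ_B(Σ_z) = 0, so that the single-valued inverse Σ(φ) (equal to φ_A^{−1}(φ) for φ ≥ 0 and φ_B^{−1}(φ) for φ ≤ 0) exists on all of ℝ, and the function (c₁ − c₂)(Σ(φ)) := √(Σ(φ)² − 4e^{−(g+z)Σ(φ)}) for φ ≥ 0 and −√(Σ(φ)² − 4e^{−(g+z)Σ(φ)}) for φ ≤ 0 is monotone increasing in φ ∈ ℝ and satisfies (c₁ − c₂)(Σ(φ)) → ±∞ as φ → ±∞. -/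

import Mathlib

open Set Filter

/-- The critical total concentration Σ_z: the unique positive solution of
Σ = 2·e^{−(g+z)Σ/2} (equivalently Σ² = 4·e^{−(g+z)Σ}). -/
noncomputable def sigmaZ (g z : ℝ) : ℝ :=
  sInf {S : ℝ | 0 < S ∧ S = 2 * Real.exp (-((g + z) * S) / 2)}

/-- f_z(Σ) = (1 + gΣ)·e^{(g+z)Σ} + g² − z². -/
noncomputable def fz (g z S : ℝ) : ℝ :=
  (1 + g * S) * Real.exp ((g + z) * S) + g ^ 2 - z ^ 2

/-- g_c = inf { z > √(1+g²) : ∃ Σ > Σ_z with f_z(Σ) = 0 }. -/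
noncomputable def gcConst (g : ℝ) : ℝ :=
  sInf {z : ℝ | Real.sqrt (1 + g ^ 2) < z ∧ ∃ S : ℝ, sigmaZ g z < S ∧ fz g z S = 0}

/-- The potential φ_A along branch A of the two-species system. -/
noncomputable def phiA (g z q S : ℝ) : ℝ :=
  (Real.log ((S + Real.sqrt (S ^ 2 - 4 * Real.exp (-((g + z) * S)))) / 2)
    + (g + z) / 2 * S
    + (g - z) / 2 * Real.sqrt (S ^ 2 - 4 * Real.exp (-((g + z) * S)))) / q

/-- The potential φ_B along branch B of the two-species system. -/
noncomputable def phiB (g z q S : ℝ) : ℝ :=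
  (Real.log ((S - Real.sqrt (S ^ 2 - 4 * Real.exp (-((g + z) * S)))) / 2)
    + (g + z) / 2 * S
    + (z - g) / 2 * Real.sqrt (S ^ 2 - 4 * Real.exp (-((g + z) * S)))) / q

noncomputable def Dd (g z S : ℝ) : ℝ := S ^ 2 - 4 * Real.exp (-((g + z) * S))

lemma Dd_cont (g z : ℝ) : Continuous (Dd g z) := by
  unfold Dd; fun_prop

lemma Dd_strictMonoOn (g z : ℝ) (ha : 0 < g + z) : StrictMonoOn (Dd g z) (Ici 0) := by
  intro s hs t ht hst
  have h1 : s ^ 2 ≤ t ^ 2 := by nlinarith [mem_Ici.1 hs]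
  have h2 : Real.exp (-((g + z) * t)) < Real.exp (-((g + z) * s)) := by
    apply Real.exp_lt_exp.2; nlinarith
  unfold Dd; nlinarith

lemma fixed_iff (g z S : ℝ) (ha : 0 < g + z) (hS : 0 < S) :
    S = 2 * Real.exp (-((g + z) * S) / 2) ↔ Dd g z S = 0 := by
  have he : (2 * Real.exp (-((g + z) * S) / 2)) ^ 2 = 4 * Real.exp (-((g + z) * S)) := by
    rw [mul_pow, sq (Real.exp _), ← Real.exp_add]; ring_nf
  constructor
  · intro h
    unfold Dd
    rw [← he, ← h]
    ring
  · intro h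
    have h2 : S ^ 2 = (2 * Real.exp (-((g + z) * S) / 2)) ^ 2 := by
      unfold Dd at h; rw [he]; linarith
    have hp : 0 < 2 * Real.exp (-((g + z) * S) / 2) := by positivity
    nlinarith

lemma sigmaZ_spec (g z : ℝ) (ha : 0 < g + z) :
    0 < sigmaZ g z ∧ sigmaZ g z < 2 ∧ Dd g z (sigmaZ g z) = 0 := by
  obtain ⟨c, hc⟩ : ∃ c ∈ Icc (0:ℝ) 2, Dd g z c = 0 := by
    have h0 : Dd g z 0 < 0 := by
      unfold Dd; nlinarith [Real.exp_pos (-((g+z)*(0:ℝ)))]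
    have h2 : 0 < Dd g z 2 := by
      unfold Dd
      have : Real.exp (-((g + z) * 2)) < 1 := by
        rw [Real.exp_lt_one_iff]; nlinarith
      nlinarith
    have := intermediate_value_Icc (by norm_num : (0:ℝ) ≤ 2) (Dd_cont g z).continuousOn
    have hm : (0:ℝ) ∈ Icc (Dd g z 0) (Dd g z 2) := ⟨le_of_lt h0, le_of_lt h2⟩
    obtain ⟨c, hc1, hc2⟩ := this hm
    exact ⟨c, hc1, hc2⟩

  obtain ⟨⟨hc0, hc2⟩, hcz⟩ := hc
  have hc0' : 0 < c := by
    rcases lt_or_eq_of_le hc0 with h | h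
    · exact h
    · exfalso; rw [← h] at hcz; unfold Dd at hcz
      nlinarith [Real.exp_pos (-((g+z)*0))]
  have hc2' : c < 2 := by
    rcases lt_or_eq_of_le hc2 with h | h
    · exact h
    · exfalso; rw [h] at hcz; unfold Dd at hcz
      have : Real.exp (-((g + z) * 2)) < 1 := by
        rw [Real.exp_lt_one_iff]; nlinarith
      nlinarith
  have hset : {S : ℝ | 0 < S ∧ S = 2 * Real.exp (-((g + z) * S) / 2)} = {c} := by
    ext S
    simp only [mem_setOf_eq, mem_singleton_iff]
    constructor
    · rintro ⟨hS, hfix⟩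
      have : Dd g z S = 0 := (fixed_iff g z S ha hS).1 hfix
      exact (Dd_strictMonoOn g z ha).injOn (le_of_lt hS) (le_of_lt hc0') (by rw [this, hcz])
    · rintro rfl
      exact ⟨hc0', (fixed_iff _ _ _ ha hc0').2 hcz⟩
  unfold sigmaZ
  rw [hset, csInf_singleton]
  exact ⟨hc0', hc2', hcz⟩






lemma fz_sigma (g z : ℝ) (ha : 0 < g + z) :
    fz g z (sigmaZ g z) = (2 / sigmaZ g z + g) ^ 2 - z ^ 2 := by
  obtain ⟨h0, h2, hD⟩ := sigmaZ_spec g z ha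
  set s0 := sigmaZ g z
  have hsq : s0 ^ 2 = 4 * Real.exp (-((g + z) * s0)) := by unfold Dd at hD; linarith
  have hexp : Real.exp ((g + z) * s0) = 4 / s0 ^ 2 := by
    rw [eq_div_iff (by positivity), hsq]
    rw [show (4:ℝ) * Real.exp (-((g + z) * s0)) = Real.exp (-((g+z)*s0)) * 4 by ring,
      ← mul_assoc, ← Real.exp_add]
    simp
  unfold fz
  rw [hexp]
  field_simp
  ring

lemma exp_one_gt_two : (2:ℝ) < Real.exp 1 := by
  have := Real.add_one_le_exp (1:ℝ)
  nlinarith [Real.exp_pos (1:ℝ), Real.exp_one_gt_d9]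

set_option maxHeartbeats 1000000 in
lemma crit (g z : ℝ) (hg : 0 < g) (hz0 : 0 < z) (h : fz g z (sigmaZ g z) ≤ 0) :
    ∀ z' : ℝ, z < z' →
      Real.sqrt (1 + g ^ 2) < z' ∧ ∃ S : ℝ, sigmaZ g z' < S ∧ fz g z' S = 0 := by
  have ha : 0 < g + z := by linarith
  obtain ⟨h0, h2, hD⟩ := sigmaZ_spec g z ha
  set s0 := sigmaZ g z with hs0def
  have hfix : s0 = 2 * Real.exp (-((g + z) * s0) / 2) := (fixed_iff g z s0 ha h0).2 hD
  rw [fz_sigma g z ha] at h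
  have hgp : 0 < 2 / s0 + g := by positivity
  have h1 : 2 / s0 + g ≤ z := by nlinarith
  set w := z - g with hwdef
  have hw0 : 0 < w := by nlinarith [div_pos two_pos h0]
  have hSw : 2 / w ≤ s0 := by
    rw [div_le_iff₀ hw0]
    have h2s : 2 / s0 ≤ w := by linarith
    rw [div_le_iff₀ h0] at h2s
    nlinarith
  have h2w : 2 ≤ s0 * w := by
    rw [div_le_iff₀ hw0] at hSw; linarith
  -- key : exp ((g+z)/w) ≤ w
  have hkey : Real.exp ((g + z) / w) ≤ w := by
    have e0 : (g + z) / w ≤ (g + z) * s0 / 2 := by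
      rw [div_le_div_iff₀ hw0 two_pos]
      nlinarith
    have e1 : Real.exp (-((g + z) * s0) / 2) ≤ Real.exp (-((g + z) / w)) := by
      apply Real.exp_le_exp.2; rw [neg_div]; linarith
    have e3 : 1 / w ≤ Real.exp (-((g + z) / w)) := by
      have : 2 / w ≤ 2 * Real.exp (-((g + z) / w)) := by
        calc 2 / w ≤ s0 := hSw
        _ = 2 * Real.exp (-((g + z) * s0) / 2) := hfix
        _ ≤ 2 * Real.exp (-((g + z) / w)) := by linarith
      rw [div_le_iff₀ hw0] at this ⊢
      linarith [this]
    have e5 : Real.exp ((g+z)/w) * (1/w) ≤ Real.exp ((g+z)/w) * Real.exp (-((g+z)/w)) :=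
      mul_le_mul_of_nonneg_left e3 (le_of_lt (Real.exp_pos _))
    rw [← Real.exp_add, show (g+z)/w + -((g+z)/w) = 0 by ring, Real.exp_zero] at e5
    rw [mul_one_div, div_le_one hw0] at e5
    exact e5
  -- now fix z' > z
  intro z' hzz'
  set w' := z' - g with hw'def
  have hw'w : w < w' := by simp [hwdef, hw'def]; linarith
  have hw'0 : 0 < w' := lt_trans hw0 hw'w
  have ha' : 0 < g + z' := by linarith
  have hz'0 : 0 < z' := by linarith
  have hkey' : Real.exp ((g + z') / w') < w' := by
    have : (g + z') / w' < (g + z) / w := by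
      rw [div_lt_div_iff₀ hw'0 hw0]
      nlinarith
    calc Real.exp ((g + z') / w') < Real.exp ((g + z) / w) := Real.exp_lt_exp.2 this
    _ ≤ w := hkey
    _ < w' := hw'w
  have hwe : Real.exp 1 ≤ w' := by
    have : (1:ℝ) ≤ (g + z') / w' := by
      rw [le_div_iff₀ hw'0]; nlinarith
    calc Real.exp 1 ≤ Real.exp ((g+z')/w') := Real.exp_le_exp.2 this
    _ ≤ w' := le_of_lt hkey'
  have hw2 : (2:ℝ) < w' := lt_of_lt_of_le exp_one_gt_two hwe
  obtain ⟨h0', h2', hD'⟩ := sigmaZ_spec g z' ha'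
  set s1 := sigmaZ g z' with hs1def
  have hfix' : s1 = 2 * Real.exp (-((g + z') * s1) / 2) := ((fixed_iff g z' s1 ha' h0').2 hD')
  have hs1w : 2 / w' < s1 := by
    by_contra hc
    push_neg at hc
    have e1 : Real.exp (-((g + z') / w')) ≤ Real.exp (-((g + z') * s1) / 2) := by
      apply Real.exp_le_exp.2
      rw [neg_div]
      have hsw : s1 * w' ≤ 2 := by
        rw [le_div_iff₀ hw'0] at hc; linarith
      have : (g + z') * s1 / 2 ≤ (g + z') / w' := by
        rw [div_le_div_iff₀ two_pos hw'0]
        nlinarith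
      linarith
    have e2 : 1 / w' < Real.exp (-((g + z') / w')) := by
      have e5 := mul_lt_mul_of_pos_left hkey' (Real.exp_pos (-((g+z')/w')))
      rw [← Real.exp_add, show -((g+z')/w') + (g+z')/w' = 0 by ring, Real.exp_zero] at e5
      rw [div_lt_iff₀ hw'0]
      linarith [e5]
    have : 2 / w' < s1 := by
      calc 2 / w' = 2 * (1/w') := by ring
      _ < 2 * Real.exp (-((g + z') / w')) := by linarith
      _ ≤ 2 * Real.exp (-((g + z') * s1) / 2) := by linarith
      _ = s1 := hfix'.symm
    linarith
  have hfz' : fz g z' s1 < 0 := by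
    rw [fz_sigma g z' ha']
    have hlt : 2 / s1 + g < z' := by
      have h2s1 : 2 / s1 < w' := by
        rw [div_lt_iff₀ h0']
        rw [div_lt_iff₀ hw'0] at hs1w
        nlinarith
      have : w' = z' - g := hw'def
      linarith
    have hp : 0 < 2 / s1 + g := by positivity
    nlinarith
  constructor
  · rw [show z' = g + w' by rw [hw'def]; ring]
    have : Real.sqrt (1 + g ^ 2) < g + w' := by
      rw [Real.sqrt_lt' (by nlinarith)]
      nlinarith
    exact this
  · set b := max (s1 + 1) (z' ^ 2) with hb
    have hb1 : s1 + 1 ≤ b := le_max_left _ _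
    have hb2 : z' ^ 2 ≤ b := le_max_right _ _
    have hbpos : 0 < b := by nlinarith
    have hfb : 0 < fz g z' b := by
      have ha'1 : 1 ≤ g + z' := by nlinarith
      have hexp := Real.add_one_le_exp ((g + z') * b)
      have h1b : Real.exp ((g + z') * b) ≤ (1 + g * b) * Real.exp ((g + z') * b) :=
        le_mul_of_one_le_left (Real.exp_pos _).le (by nlinarith)
      have hab : b ≤ (g + z') * b := by nlinarith
      unfold fz
      linarith [sq_nonneg g]
    have hcont : ContinuousOn (fz g z') (Icc s1 b) := by unfold fz; fun_prop
    have hle : s1 ≤ b := by linarith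
    obtain ⟨c, hc1, hc2⟩ := intermediate_value_Icc hle hcont ⟨hfz'.le, hfb.le⟩
    refine ⟨c, ?_, hc2⟩
    rcases lt_or_eq_of_le hc1.1 with hlt | heq
    · exact hlt
    · exfalso; rw [← heq] at hc2; rw [hc2] at hfz'; exact lt_irrefl 0 hfz'

lemma fz_pos (g z : ℝ) (hg : 0 < g) (hz0 : 0 < z) (hz : z < gcConst g) :
    ∀ S : ℝ, sigmaZ g z ≤ S → 0 < fz g z S := by
  have ha : 0 < g + z := by linarith
  have hs0 : 0 < fz g z (sigmaZ g z) := by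
    by_contra hc
    push_neg at hc
    have hcrit := crit g z hg hz0 hc
    set T := {z : ℝ | Real.sqrt (1 + g ^ 2) < z ∧ ∃ S : ℝ, sigmaZ g z < S ∧ fz g z S = 0}
      with hT
    have hbdd : BddBelow T := by
      refine ⟨0, fun x hx => ?_⟩
      exact le_trans (Real.sqrt_nonneg _) (le_of_lt hx.1)
    have hmem : (z + gcConst g) / 2 ∈ T := hcrit _ (by unfold gcConst at hz ⊢; linarith)
    have : gcConst g ≤ (z + gcConst g) / 2 := csInf_le hbdd hmem
    linarith
  intro S hS
  obtain ⟨h0, h2, hD⟩ := sigmaZ_spec g z ha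
  have hmono : fz g z (sigmaZ g z) ≤ fz g z S := by
    unfold fz
    have he : Real.exp ((g + z) * sigmaZ g z) ≤ Real.exp ((g + z) * S) :=
      Real.exp_le_exp.2 (by nlinarith)
    have hmul := mul_le_mul (by nlinarith : 1 + g * sigmaZ g z ≤ 1 + g * S) he
      (Real.exp_pos _).le (by nlinarith)
    linarith
  linarith






noncomputable def Rr (g z S : ℝ) : ℝ := Real.sqrt (S ^ 2 - 4 * Real.exp (-((g + z) * S)))

lemma Rr_eq_sqrt_Dd (g z S : ℝ) : Rr g z S = Real.sqrt (Dd g z S) := rfl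


lemma Dd_nonneg_of {g z : ℝ} (ha : 0 < g + z) (S : ℝ) (hS : sigmaZ g z ≤ S) : 0 ≤ Dd g z S := by
  obtain ⟨h0, h2, hD⟩ := sigmaZ_spec g z ha
  rcases eq_or_lt_of_le hS with h | h
  · rw [← h, hD]
  · have := Dd_strictMonoOn g z ha (le_of_lt h0) (le_of_lt (lt_of_lt_of_le h0 hS)) h
    linarith [hD ▸ this]

lemma Dd_pos_of {g z : ℝ} (ha : 0 < g + z) (S : ℝ) (hS : sigmaZ g z < S) : 0 < Dd g z S := by
  obtain ⟨h0, h2, hD⟩ := sigmaZ_spec g z ha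
  have := Dd_strictMonoOn g z ha (le_of_lt h0) (le_of_lt (lt_trans h0 hS)) hS
  linarith [hD ▸ this]

lemma Rr_sq {g z : ℝ} (ha : 0 < g + z) (S : ℝ) (hS : sigmaZ g z ≤ S) :
    (Rr g z S) ^ 2 = S ^ 2 - 4 * Real.exp (-((g + z) * S)) :=
  Real.sq_sqrt (Dd_nonneg_of ha S hS)

lemma Rr_nonneg (g z S : ℝ) : 0 ≤ Rr g z S := Real.sqrt_nonneg _

lemma Rr_lt_self {g z : ℝ} (ha : 0 < g + z) (S : ℝ) (hS : sigmaZ g z ≤ S) : Rr g z S < S := by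
  obtain ⟨h0, _, _⟩ := sigmaZ_spec g z ha
  have hSpos : 0 < S := lt_of_lt_of_le h0 hS
  have h1 : (Rr g z S) ^ 2 < S ^ 2 := by
    rw [Rr_sq ha S hS]
    nlinarith [Real.exp_pos (-((g + z) * S))]
  nlinarith [Rr_nonneg g z S]

lemma Rr_pos_of {g z : ℝ} (ha : 0 < g + z) (S : ℝ) (hS : sigmaZ g z < S) : 0 < Rr g z S :=
  Real.sqrt_pos.2 (Dd_pos_of ha S hS)

set_option maxHeartbeats 1000000 in
lemma phiA_hasDerivAt {g z q : ℝ} (ha : 0 < g + z) (hq : q ≠ 0) (x : ℝ)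
    (hx : sigmaZ g z < x) :
    HasDerivAt (phiA g z q)
      ((1 + g * x + (g ^ 2 - z ^ 2) * Real.exp (-((g + z) * x))) / (Rr g z x * q)) x := by
  obtain ⟨h0, _, _⟩ := sigmaZ_spec g z ha
  have hxpos : 0 < x := lt_trans h0 hx
  set E := Real.exp (-((g + z) * x)) with hEdef
  have hEpos : 0 < E := Real.exp_pos _
  set R := Rr g z x with hRdef
  have hRpos : 0 < R := Rr_pos_of ha x hx
  have hR2 : R ^ 2 = x ^ 2 - 4 * E := Rr_sq ha x (le_of_lt hx)
  have hRx : R < x := Rr_lt_self ha x (le_of_lt hx)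
  have hxR : 0 < (x + R) / 2 := by linarith
  -- derivative of the exponential
  have hlin : HasDerivAt (fun S : ℝ => -((g + z) * S)) (-(g + z)) x := by
    have h := ((hasDerivAt_id x).const_mul (g + z)).neg
    exact h.congr_deriv (by ring)
  have hE' : HasDerivAt (fun S : ℝ => Real.exp (-((g + z) * S))) (E * -(g + z)) x :=
    hlin.exp
  -- derivative of Dd
  have hDd : HasDerivAt (fun S : ℝ => S ^ 2 - 4 * Real.exp (-((g + z) * S)))
      (2 * x + 4 * (g + z) * E) x := by
    have hp : HasDerivAt (fun S : ℝ => S ^ 2) (2 * x) x := by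
      simpa using hasDerivAt_pow 2 x
    have := hp.sub (hE'.const_mul 4)
    exact this.congr_deriv (by ring)
  -- derivative of R
  have hDne : x ^ 2 - 4 * Real.exp (-((g + z) * x)) ≠ 0 := by
    have := Dd_pos_of ha x hx
    unfold Dd at this
    rw [← hEdef] at this ⊢
    linarith
  have hRder : HasDerivAt (fun S : ℝ => Real.sqrt (S ^ 2 - 4 * Real.exp (-((g + z) * S))))
      ((2 * x + 4 * (g + z) * E) / (2 * R)) x := by
    have := hDd.sqrt hDne
    convert this using 2
    rfl
  -- derivative of the log term
  have hargne : (x + Real.sqrt (x ^ 2 - 4 * Real.exp (-((g + z) * x)))) / 2 ≠ 0 := by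
    show (x + R) / 2 ≠ 0
    linarith
  have hlog : HasDerivAt
      (fun S : ℝ => Real.log ((S + Real.sqrt (S ^ 2 - 4 * Real.exp (-((g + z) * S)))) / 2))
      (((1 + (2 * x + 4 * (g + z) * E) / (2 * R)) / 2) / ((x + R) / 2)) x := by
    have hin : HasDerivAt
        (fun S : ℝ => (S + Real.sqrt (S ^ 2 - 4 * Real.exp (-((g + z) * S)))) / 2)
        ((1 + (2 * x + 4 * (g + z) * E) / (2 * R)) / 2) x :=
      ((hasDerivAt_id x).add hRder).div_const 2
    exact hin.log hargne
  -- assemble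
  have htot : HasDerivAt (phiA g z q)
      (((((1 + (2 * x + 4 * (g + z) * E) / (2 * R)) / 2) / ((x + R) / 2))
        + (g + z) / 2
        + (g - z) / 2 * ((2 * x + 4 * (g + z) * E) / (2 * R))) / q) x := by
    have hmid : HasDerivAt (fun S : ℝ => (g + z) / 2 * S) ((g + z) / 2) x := by
      have h := (hasDerivAt_id x).const_mul ((g + z) / 2)
      exact h.congr_deriv (by ring)
    exact (((hlog.add hmid).add (hRder.const_mul ((g - z) / 2))).div_const q)
  convert htot using 1
  have hE4 : E = (x ^ 2 - R ^ 2) / 4 := by linarith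
  have h1 : R ≠ 0 := ne_of_gt hRpos
  have h2 : x + R ≠ 0 := by linarith
  rw [hE4]
  field_simp
  ring


lemma phiA_continuousOn {g z q : ℝ} (ha : 0 < g + z) :
    ContinuousOn (phiA g z q) (Ici (sigmaZ g z)) := by
  obtain ⟨h0, _, _⟩ := sigmaZ_spec g z ha
  unfold phiA
  apply ContinuousOn.div_const
  apply ContinuousOn.add
  apply ContinuousOn.add
  · apply ContinuousOn.log
    · fun_prop
    · intro x hx
      have h1 : 0 < x := lt_of_lt_of_le h0 hx
      have h2 : 0 ≤ Real.sqrt (x ^ 2 - 4 * Real.exp (-((g + z) * x))) := Real.sqrt_nonneg _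
      exact ne_of_gt (by linarith)
  · fun_prop
  · fun_prop

lemma phiA_at_sigma {g z q : ℝ} (ha : 0 < g + z) : phiA g z q (sigmaZ g z) = 0 := by
  obtain ⟨h0, h2, hD⟩ := sigmaZ_spec g z ha
  have hfix := (fixed_iff _ _ _ ha h0).2 hD
  unfold phiA
  have hz : (sigmaZ g z) ^ 2 - 4 * Real.exp (-((g + z) * sigmaZ g z)) = 0 := by
    unfold Dd at hD; linarith
  rw [hz, Real.sqrt_zero]
  have h12 : sigmaZ g z / 2 = Real.exp (-((g + z) * sigmaZ g z) / 2) := by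
    rw [div_eq_iff (two_ne_zero)]
    linarith [hfix]
  rw [add_zero, h12, Real.log_exp]
  ring

lemma phiB_eq_neg_phiA {g z q : ℝ} (ha : 0 < g + z) (S : ℝ) (hS : sigmaZ g z ≤ S) :
    phiB g z q S = - phiA g z q S := by
  obtain ⟨h0, _, _⟩ := sigmaZ_spec g z ha
  have hSpos : 0 < S := lt_of_lt_of_le h0 hS
  set R := Real.sqrt (S ^ 2 - 4 * Real.exp (-((g + z) * S))) with hRdef
  have hR2 : R ^ 2 = S ^ 2 - 4 * Real.exp (-((g + z) * S)) := Rr_sq ha S hS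
  have hRx : R < S := Rr_lt_self ha S hS
  have hRnn : 0 ≤ R := Real.sqrt_nonneg _
  have hplus : 0 < (S + R) / 2 := by linarith
  have hminus : 0 < (S - R) / 2 := by linarith
  have hprod : ((S + R) / 2) * ((S - R) / 2) = Real.exp (-((g + z) * S)) := by
    have h : ((S + R) / 2) * ((S - R) / 2) = (S ^ 2 - R ^ 2) / 4 := by ring
    rw [h, hR2]; ring
  have hlogmul := Real.log_mul (ne_of_gt hplus) (ne_of_gt hminus)
  rw [hprod, Real.log_exp] at hlogmul
  have hlog : Real.log ((S - R) / 2) = -((g + z) * S) - Real.log ((S + R) / 2) := by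
    linarith
  unfold phiB phiA
  rw [← hRdef, hlog]
  ring

lemma phiA_strictMono {g z q : ℝ} (hg : 0 < g) (hz0 : 0 < z) (hq : 1 ≤ q)
    (hz : z < gcConst g) : StrictMonoOn (phiA g z q) (Ici (sigmaZ g z)) := by
  have ha : 0 < g + z := by linarith
  have hq0 : (0:ℝ) < q := lt_of_lt_of_le one_pos hq
  apply strictMonoOn_of_deriv_pos (convex_Ici _) (phiA_continuousOn ha)
  intro x hx
  rw [interior_Ici] at hx
  have hder := phiA_hasDerivAt ha (ne_of_gt hq0) x hx
  rw [hder.deriv]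
  have hfz := fz_pos g z hg hz0 hz x (le_of_lt hx)
  have hexp1 : Real.exp ((g + z) * x) * Real.exp (-((g + z) * x)) = 1 := by
    rw [← Real.exp_add]; simp
  have hnum : 1 + g * x + (g ^ 2 - z ^ 2) * Real.exp (-((g + z) * x))
      = fz g z x * Real.exp (-((g + z) * x)) := by
    unfold fz
    linear_combination (-(1 + g * x)) * hexp1
  rw [hnum]
  exact div_pos (mul_pos hfz (Real.exp_pos _)) (mul_pos (Rr_pos_of ha x hx) hq0)

lemma phiB_strictAnti {g z q : ℝ} (hg : 0 < g) (hz0 : 0 < z) (hq : 1 ≤ q)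
    (hz : z < gcConst g) : StrictAntiOn (phiB g z q) (Ici (sigmaZ g z)) := by
  have ha : 0 < g + z := by linarith
  intro x hx y hy hxy
  rw [phiB_eq_neg_phiA ha x hx, phiB_eq_neg_phiA ha y hy]
  exact neg_lt_neg (phiA_strictMono hg hz0 hq hz hx hy hxy)

lemma phiA_lower {g z q : ℝ} (hg : 0 < g) (hz0 : 0 < z) (hq : 1 ≤ q) (S : ℝ)
    (hS : sigmaZ g z ≤ S) :
    (Real.log (S / 2) + min g z * S) / q ≤ phiA g z q S := by
  have ha : 0 < g + z := by linarith
  obtain ⟨h0, _, _⟩ := sigmaZ_spec g z ha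
  have hq0 : (0:ℝ) < q := lt_of_lt_of_le one_pos hq
  have hSpos : 0 < S := lt_of_lt_of_le h0 hS
  unfold phiA
  set R := Real.sqrt (S ^ 2 - 4 * Real.exp (-((g + z) * S))) with hRdef
  have hRx : R < S := Rr_lt_self ha S hS
  have hRnn : 0 ≤ R := Real.sqrt_nonneg _
  rw [div_le_div_iff_of_pos_right hq0]
  have hlog : Real.log (S / 2) ≤ Real.log ((S + R) / 2) :=
    Real.log_le_log (by positivity) (by linarith)
  rcases le_total g z with hgz | hgz
  · rw [min_eq_left hgz]; nlinarith
  · rw [min_eq_right hgz]; nlinarith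

lemma phiA_surj {g z q : ℝ} (hg : 0 < g) (hz0 : 0 < z) (hq : 1 ≤ q) :
    ∀ y : ℝ, 0 ≤ y → ∃ x, sigmaZ g z ≤ x ∧ phiA g z q x = y := by
  intro y hy
  have ha : 0 < g + z := by linarith
  have hq0 : (0:ℝ) < q := lt_of_lt_of_le one_pos hq
  have hm : 0 < min g z := lt_min hg hz0
  set b := max (max (sigmaZ g z) 2) (q * y / min g z) with hbdef
  have hb1 : sigmaZ g z ≤ b := le_trans (le_max_left _ _) (le_max_left _ _)
  have hb2 : (2:ℝ) ≤ b := le_trans (le_max_right _ _) (le_max_left _ _)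
  have hb3 : q * y / min g z ≤ b := le_max_right _ _
  have hval : y ≤ phiA g z q b := by
    have hlow := phiA_lower hg hz0 hq b hb1
    have h1 : q * y ≤ min g z * b := by
      rw [div_le_iff₀ hm] at hb3; linarith
    have hlog0 : 0 ≤ Real.log (b / 2) := Real.log_nonneg (by linarith)
    have h2 : y ≤ (Real.log (b / 2) + min g z * b) / q := by
      rw [le_div_iff₀ hq0]; nlinarith
    linarith
  have hmem : y ∈ Icc (phiA g z q (sigmaZ g z)) (phiA g z q b) := by
    rw [phiA_at_sigma ha]; exact ⟨hy, hval⟩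
  obtain ⟨c, hc1, hc2⟩ := intermediate_value_Icc hb1
    ((phiA_continuousOn ha).mono Icc_subset_Ici_self) hmem
  exact ⟨c, hc1.1, hc2⟩

lemma Rr_monoOn {g z : ℝ} (ha : 0 < g + z) (s t : ℝ) (hs : sigmaZ g z ≤ s) (hst : s ≤ t) :
    Rr g z s ≤ Rr g z t := by
  obtain ⟨h0, _, _⟩ := sigmaZ_spec g z ha
  apply Real.sqrt_le_sqrt
  rcases eq_or_lt_of_le hst with he | hl
  · rw [he]
  · have := Dd_strictMonoOn g z ha (le_trans h0.le hs) (le_trans (le_trans h0.le hs) hst) hl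
    unfold Dd at this
    linarith

/-- for 0 < z < g_c, f_z(Σ) > 0 for all Σ ≥ Σ_z, φ_A is strictly
increasing and φ_B strictly decreasing on [Σ_z,∞) with φ_A(Σ_z) = φ_B(Σ_z) = 0, the
single-valued inverse Σ(φ) exists on all of ℝ, and the associated function
(c₁ − c₂)(Σ(φ)) is monotone increasing with (c₁−c₂)(Σ(φ)) → ±∞ as φ → ±∞. -/
theorem stmt_12 (g z q : ℝ) (hg : 0 < g) (hq : 1 ≤ q) (hz0 : 0 < z) (hz : z < gcConst g) :
    (∀ S : ℝ, sigmaZ g z ≤ S → 0 < fz g z S) ∧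
    StrictMonoOn (phiA g z q) (Ici (sigmaZ g z)) ∧
    StrictAntiOn (phiB g z q) (Ici (sigmaZ g z)) ∧
    phiA g z q (sigmaZ g z) = 0 ∧ phiB g z q (sigmaZ g z) = 0 ∧
    ∃ S : ℝ → ℝ,
      (∀ φ : ℝ, sigmaZ g z ≤ S φ) ∧
      (∀ φ : ℝ, 0 ≤ φ → phiA g z q (S φ) = φ) ∧
      (∀ φ : ℝ, φ ≤ 0 → phiB g z q (S φ) = φ) ∧
      ∀ D : ℝ → ℝ,
        (∀ φ : ℝ, 0 ≤ φ → D φ = Real.sqrt ((S φ) ^ 2 - 4 * Real.exp (-((g + z) * S φ)))) →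
        (∀ φ : ℝ, φ ≤ 0 → D φ = -Real.sqrt ((S φ) ^ 2 - 4 * Real.exp (-((g + z) * S φ)))) →
        Monotone D ∧ Tendsto D atTop atTop ∧ Tendsto D atBot atBot := by
  have ha : 0 < g + z := by linarith
  have hq0 : (0:ℝ) < q := lt_of_lt_of_le one_pos hq
  obtain ⟨h0, h2, hDD⟩ := sigmaZ_spec g z ha
  have hmono := phiA_strictMono hg hz0 hq hz
  have hA0 : phiA g z q (sigmaZ g z) = 0 := phiA_at_sigma ha
  have hB0 : phiB g z q (sigmaZ g z) = 0 := by
    rw [phiB_eq_neg_phiA ha _ le_rfl, hA0]; ring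
  refine ⟨fz_pos g z hg hz0 hz, hmono, phiB_strictAnti hg hz0 hq hz, hA0, hB0, ?_⟩
  have hsur := phiA_surj (q := q) hg hz0 hq
  set S : ℝ → ℝ := fun φ => Classical.choose (hsur |φ| (abs_nonneg φ)) with hSdef
  have hSspec : ∀ φ : ℝ, sigmaZ g z ≤ S φ ∧ phiA g z q (S φ) = |φ| := fun φ =>
    Classical.choose_spec (hsur |φ| (abs_nonneg φ))
  refine ⟨S, fun φ => (hSspec φ).1, ?_, ?_, ?_⟩
  · intro φ hφ; rw [(hSspec φ).2, abs_of_nonneg hφ]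
  · intro φ hφ
    rw [phiB_eq_neg_phiA ha _ (hSspec φ).1, (hSspec φ).2, abs_of_nonpos hφ]; ring
  intro D hD1 hD2
  have hSmono : ∀ φ₁ φ₂ : ℝ, |φ₁| ≤ |φ₂| → S φ₁ ≤ S φ₂ := by
    intro φ₁ φ₂ h
    by_contra hc
    push_neg at hc
    have := hmono (hSspec φ₂).1 (hSspec φ₁).1 hc
    rw [(hSspec φ₁).2, (hSspec φ₂).2] at this
    linarith
  have hRmono : ∀ φ₁ φ₂ : ℝ, |φ₁| ≤ |φ₂| →
      Real.sqrt ((S φ₁) ^ 2 - 4 * Real.exp (-((g + z) * S φ₁)))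
        ≤ Real.sqrt ((S φ₂) ^ 2 - 4 * Real.exp (-((g + z) * S φ₂))) := by
    intro φ₁ φ₂ h
    exact Rr_monoOn ha _ _ (hSspec φ₁).1 (hSmono φ₁ φ₂ h)
  have hSbig : ∀ C : ℝ, sigmaZ g z ≤ C → ∀ φ : ℝ, phiA g z q C < |φ| → C < S φ := by
    intro C hC φ h
    by_contra hc
    push_neg at hc
    have hle := hmono.monotoneOn (hSspec φ).1 hC hc
    rw [(hSspec φ).2] at hle
    linarith
  refine ⟨?_, ?_, ?_⟩
  · -- Monotone D
    intro φ₁ φ₂ h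
    rcases le_total 0 φ₁ with h1 | h1
    · rw [hD1 φ₁ h1, hD1 φ₂ (le_trans h1 h)]
      exact hRmono φ₁ φ₂ (by rw [abs_of_nonneg h1, abs_of_nonneg (le_trans h1 h)]; exact h)
    · rcases le_total 0 φ₂ with h2 | h2
      · calc D φ₁ ≤ 0 := by rw [hD2 φ₁ h1]; simp [Real.sqrt_nonneg]
        _ ≤ D φ₂ := by rw [hD1 φ₂ h2]; exact Real.sqrt_nonneg _
      · rw [hD2 φ₁ h1, hD2 φ₂ h2]
        apply neg_le_neg
        exact hRmono φ₂ φ₁ (by rw [abs_of_nonpos h1, abs_of_nonpos h2]; linarith)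
  · -- atTop
    rw [tendsto_atTop]
    intro M
    set C := max (max (sigmaZ g z) (M + 2)) 2 with hCdef
    have hC1 : sigmaZ g z ≤ C := le_trans (le_max_left _ _) (le_max_left _ _)
    have hC2 : M + 2 ≤ C := le_trans (le_max_right _ _) (le_max_left _ _)
    have hC3 : (2:ℝ) ≤ C := le_max_right _ _
    filter_upwards [eventually_ge_atTop (max 0 (phiA g z q C) + 1)] with φ hφ
    have hφ0 : 0 ≤ φ := by
      have := le_max_left 0 (phiA g z q C); linarith
    have hφC : phiA g z q C < |φ| := by
      rw [abs_of_nonneg hφ0]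
      have := le_max_right 0 (phiA g z q C); linarith
    have hCS := hSbig C hC1 φ hφC
    rw [hD1 φ hφ0]
    have hS2 : 2 ≤ S φ := le_trans hC3 hCS.le
    have hE1 : Real.exp (-((g + z) * S φ)) ≤ 1 := by
      rw [Real.exp_le_one_iff]
      nlinarith
    have hkey : (S φ - 2) ^ 2 ≤ (S φ) ^ 2 - 4 * Real.exp (-((g + z) * S φ)) := by nlinarith
    have hsq := Real.sqrt_le_sqrt hkey
    rw [Real.sqrt_sq (by linarith)] at hsq
    linarith
  · -- atBot
    rw [tendsto_atBot]
    intro M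
    set C := max (max (sigmaZ g z) (2 - M)) 2 with hCdef
    have hC1 : sigmaZ g z ≤ C := le_trans (le_max_left _ _) (le_max_left _ _)
    have hC2 : 2 - M ≤ C := le_trans (le_max_right _ _) (le_max_left _ _)
    have hC3 : (2:ℝ) ≤ C := le_max_right _ _
    filter_upwards [eventually_le_atBot (-(max 0 (phiA g z q C) + 1))] with φ hφ
    have hφ0 : φ ≤ 0 := by
      have := le_max_left 0 (phiA g z q C); linarith
    have hφC : phiA g z q C < |φ| := by
      rw [abs_of_nonpos hφ0]
      have := le_max_right 0 (phiA g z q C); linarith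
    have hCS := hSbig C hC1 φ hφC
    rw [hD2 φ hφ0]
    have hS2 : 2 ≤ S φ := le_trans hC3 hCS.le
    have hE1 : Real.exp (-((g + z) * S φ)) ≤ 1 := by
      rw [Real.exp_le_one_iff]
      nlinarith
    have hkey : (S φ - 2) ^ 2 ≤ (S φ) ^ 2 - 4 * Real.exp (-((g + z) * S φ)) := by nlinarith
    have hsq := Real.sqrt_le_sqrt hkey
    rw [Real.sqrt_sq (by linarith)] at hsq
    linarith
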